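/- Two solutions C(n₁,n₂,r) and C(m₁,m₂,s) are isomorphic (as cycle sets, i.e. there is a bijection φ with φ∘σ_x = σ'_{φ(x)}∘φ for all x) if and only if n₁ = m₁, n₂ = m₂ and r = s. -/

import Mathlib

/-- The map `σ_{(a,i)}((b,j)) = (b - ar + i, j + ir - ar² + 1)` of the solution `C(n₁,n₂,r)`. -/
def Csigma {n₁ n₂ : ℕ} (hd : n₁ ∣ n₂) (r : ℕ)
    (x y : ZMod n₁ × ZMod n₂) : ZMod n₁ × ZMod n₂ :=
  (y.1 - x.1 * (r : ZMod n₁) + ZMod.castHom hd (ZMod n₁) x.2,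
   y.2 + x.2 * (r : ZMod n₂) - (x.1.val : ZMod n₂) * (r : ZMod n₂) ^ 2 + 1)

def CsigmaAuxT {n₁ n₂ : ℕ} (hd : n₁ ∣ n₂) (r : ℕ) (x : ZMod n₁ × ZMod n₂) : ZMod n₁ × ZMod n₂ :=
  (ZMod.castHom hd (ZMod n₁) x.2 - x.1 * (r : ZMod n₁),
   x.2 * (r : ZMod n₂) - (x.1.val : ZMod n₂) * (r : ZMod n₂) ^ 2 + 1)

lemma CsigmaAux_eq_add {n₁ n₂ : ℕ} (hd : n₁ ∣ n₂) (r : ℕ) (x y : ZMod n₁ × ZMod n₂) :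
    Csigma hd r x y = y + CsigmaAuxT hd r x := by
  unfold Csigma CsigmaAuxT
  ext
  · simp [Prod.fst_add]; ring
  · simp [Prod.snd_add]; ring

lemma CsigmaAuxT00 {n₁ n₂ : ℕ} [NeZero n₁] (hd : n₁ ∣ n₂) (r : ℕ) :
    CsigmaAuxT hd r ((0 : ZMod n₁), (0 : ZMod n₂)) = ((0 : ZMod n₁), (1 : ZMod n₂)) := by
  simp [CsigmaAuxT, ZMod.val_zero]

lemma CsigmaAuxT01 {n₁ n₂ : ℕ} [NeZero n₁] (hd : n₁ ∣ n₂) (r : ℕ) :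
    CsigmaAuxT hd r ((0 : ZMod n₁), (1 : ZMod n₂)) = ((1 : ZMod n₁), (r : ZMod n₂) + 1) := by
  have h1 : ZMod.castHom hd (ZMod n₁) 1 = 1 := map_one _
  simp [CsigmaAuxT, ZMod.val_zero, h1]

lemma CsigmaAux_prod_decomp {n₁ n₂ : ℕ} [NeZero n₁] [NeZero n₂] (a : ZMod n₁) (i : ZMod n₂) :
    ((a, i) : ZMod n₁ × ZMod n₂)
      = a.val • ((1 : ZMod n₁), (0 : ZMod n₂)) + i.val • ((0 : ZMod n₁), (1 : ZMod n₂)) := by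
  simp [Prod.ext_iff, Prod.smul_mk, nsmul_eq_mul, ZMod.natCast_val, ZMod.cast_id]

/-- `C(n₁,n₂,r) ≅ C(m₁,m₂,s)` iff `n₁ = m₁`, `n₂ = m₂` and `r = s`. -/
theorem Csigma_iso_iff (n₁ n₂ m₁ m₂ r s : ℕ)
    (hn1 : 0 < n₁) (hn2 : 0 < n₂) (hm1 : 0 < m₁) (hm2 : 0 < m₂)
    (hdn : n₁ ∣ n₂) (hdm : m₁ ∣ m₂) (hrn : r < n₂ / n₁) (hsm : s < m₂ / m₁)
    (hr2 : n₂ ∣ n₁ * r ^ 2) (hs2 : m₂ ∣ m₁ * s ^ 2) :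
    (∃ φ : (ZMod n₁ × ZMod n₂) ≃ (ZMod m₁ × ZMod m₂),
      ∀ x y, φ (Csigma hdn r x y) = Csigma hdm s (φ x) (φ y)) ↔
      (n₁ = m₁ ∧ n₂ = m₂ ∧ r = s) := by
  haveI : NeZero n₁ := ⟨hn1.ne'⟩
  haveI : NeZero n₂ := ⟨hn2.ne'⟩
  haveI : NeZero m₁ := ⟨hm1.ne'⟩
  haveI : NeZero m₂ := ⟨hm2.ne'⟩
  constructor
  · rintro ⟨φ, hφ⟩
    simp only [CsigmaAux_eq_add] at hφ
    -- hφ : ∀ x y, φ (y + CsigmaAuxT hdn r x) = φ y + CsigmaAuxT hdm s (φ x)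
    set ψ : ZMod n₁ × ZMod n₂ → ZMod m₁ × ZMod m₂ := fun g => φ g - φ 0 with hψdef
    -- Step 1: φ intertwines all translations
    have key : ∀ g : ZMod n₁ × ZMod n₂, ∀ y, φ (y + g) = φ y + ψ g := by
      suffices H : ∀ g : ZMod n₁ × ZMod n₂, ∃ h, ∀ y, φ (y + g) = φ y + h by
        intro g y
        obtain ⟨h, hh⟩ := H g
        have h0 := hh 0
        rw [zero_add] at h0
        have hhe : h = ψ g := by rw [hψdef]; simp only [h0]; abel
        rw [hh y, hhe]
      have Hadd : ∀ g g' : ZMod n₁ × ZMod n₂,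
          (∃ h, ∀ y, φ (y + g) = φ y + h) → (∃ h, ∀ y, φ (y + g') = φ y + h) →
          (∃ h, ∀ y, φ (y + (g + g')) = φ y + h) := by
        rintro g g' ⟨h, hh⟩ ⟨h', hh'⟩
        exact ⟨h + h', fun y => by rw [← add_assoc, hh', hh, add_assoc]⟩
      have Hneg : ∀ g : ZMod n₁ × ZMod n₂,
          (∃ h, ∀ y, φ (y + g) = φ y + h) → (∃ h, ∀ y, φ (y + -g) = φ y + h) := by
        rintro g ⟨h, hh⟩
        refine ⟨-h, fun y => ?_⟩
        have h2 := hh (y + -g)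
        rw [neg_add_cancel_right] at h2
        rw [h2, add_neg_cancel_right]
      have Hsmul : ∀ (c : ℕ) (g : ZMod n₁ × ZMod n₂),
          (∃ h, ∀ y, φ (y + g) = φ y + h) → (∃ h, ∀ y, φ (y + c • g) = φ y + h) := by
        intro c g hg
        induction c with
        | zero => exact ⟨0, by simp⟩
        | succ c ih =>
          obtain ⟨h, hh⟩ := ih
          obtain ⟨h', hh'⟩ := hg
          exact ⟨h + h', fun y => by rw [succ_nsmul, ← add_assoc, hh', hh, add_assoc]⟩
      have Ht : ∀ x, ∃ h, ∀ y, φ (y + CsigmaAuxT hdn r x) = φ y + h := fun x => ⟨_, hφ x⟩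
      have h01 : ∃ h, ∀ y, φ (y + ((0 : ZMod n₁), (1 : ZMod n₂))) = φ y + h := by
        rw [← CsigmaAuxT00 hdn r]; exact Ht _
      have h1r : ∃ h, ∀ y, φ (y + ((1 : ZMod n₁), (r : ZMod n₂) + 1)) = φ y + h := by
        rw [← CsigmaAuxT01 hdn r]; exact Ht _
      have h10 : ∃ h, ∀ y, φ (y + ((1 : ZMod n₁), (0 : ZMod n₂))) = φ y + h := by
        have heq : ((1 : ZMod n₁), (0 : ZMod n₂))
            = ((1 : ZMod n₁), (r : ZMod n₂) + 1)
              + -((r + 1 : ℕ) • ((0 : ZMod n₁), (1 : ZMod n₂))) := by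
          simp [Prod.ext_iff, Prod.smul_mk, nsmul_eq_mul]
        rw [heq]
        exact Hadd _ _ h1r (Hneg _ (Hsmul _ _ h01))
      intro g
      obtain ⟨a, i⟩ := g
      rw [CsigmaAux_prod_decomp a i]
      exact Hadd _ _ (Hsmul _ _ h10) (Hsmul _ _ h01)
    have ψ0 : ψ 0 = 0 := by simp [hψdef]
    have φeq : ∀ g, φ g = φ 0 + ψ g := fun g => by
      have h := key g 0; rwa [zero_add] at h
    have ψadd : ∀ g g', ψ (g + g') = ψ g + ψ g' := by
      intro g g'
      have h1 : φ (g + g') = φ g + ψ g' := key g' g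
      rw [φeq g, φeq (g + g'), add_assoc] at h1
      exact add_left_cancel h1
    have ψsmul : ∀ (c : ℕ) g, ψ (c • g) = c • ψ g := by
      intro c g
      induction c with
      | zero => simpa using ψ0
      | succ c ih => rw [succ_nsmul, succ_nsmul, ψadd, ih]
    have ψbij : Function.Bijective ψ := by
      have h : ψ = (Equiv.subRight (φ 0)) ∘ φ := rfl
      rw [h]
      exact (Equiv.subRight (φ 0)).bijective.comp φ.bijective
    -- Step 2: n₂ = m₂
    have hGtor : ∀ g : ZMod n₁ × ZMod n₂, n₂ • g = 0 := by
      rintro ⟨a, i⟩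
      simp [Prod.ext_iff, Prod.smul_mk, nsmul_eq_mul, ZMod.natCast_self,
        (ZMod.natCast_eq_zero_iff n₂ n₁).mpr hdn]
    have hG'tor : ∀ g : ZMod m₁ × ZMod m₂, m₂ • g = 0 := by
      rintro ⟨a, i⟩
      simp [Prod.ext_iff, Prod.smul_mk, nsmul_eq_mul, ZMod.natCast_self,
        (ZMod.natCast_eq_zero_iff m₂ m₁).mpr hdm]
    have hm2dvd : m₂ ∣ n₂ := by
      obtain ⟨g, hg⟩ := ψbij.2 ((0 : ZMod m₁), (1 : ZMod m₂))
      have h1 : n₂ • ((0 : ZMod m₁), (1 : ZMod m₂)) = 0 := by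
        rw [← hg, ← ψsmul, hGtor, ψ0]
      have h2 : (n₂ : ZMod m₂) = 0 := by
        have h3 := congrArg Prod.snd h1
        simpa [nsmul_eq_mul] using h3
      exact (ZMod.natCast_eq_zero_iff _ _).mp h2
    have hn2dvd : n₂ ∣ m₂ := by
      have h1 : ψ (m₂ • ((0 : ZMod n₁), (1 : ZMod n₂))) = ψ 0 := by
        rw [ψsmul, ψ0, hG'tor]
      have h2 := ψbij.1 h1
      have h3 : (m₂ : ZMod n₂) = 0 := by
        have h4 := congrArg Prod.snd h2
        simpa [nsmul_eq_mul] using h4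
      exact (ZMod.natCast_eq_zero_iff _ _).mp h3
    have hn2m2 : n₂ = m₂ := Nat.dvd_antisymm hn2dvd hm2dvd
    have hn1m1 : n₁ = m₁ := by
      have hcard : Fintype.card (ZMod n₁ × ZMod n₂) = Fintype.card (ZMod m₁ × ZMod m₂) :=
        Fintype.card_congr φ
      rw [Fintype.card_prod, Fintype.card_prod, ZMod.card, ZMod.card, ZMod.card, ZMod.card,
        hn2m2] at hcard
      exact Nat.eq_of_mul_eq_mul_right (hn2m2 ▸ hn2) hcard
    subst hn1m1
    subst hn2m2
    refine ⟨rfl, rfl, ?_⟩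
    -- Step 3: r = s
    set k := n₂ / n₁ with hkdef
    have hkn : n₂ = n₁ * k := (Nat.mul_div_cancel' hdn).symm
    have hkpos : 0 < k := Nat.div_pos (Nat.le_of_dvd hn2 hdn) hn1
    haveI : NeZero k := ⟨hkpos.ne'⟩
    have hkd : k ∣ n₂ := ⟨n₁, by rw [hkn, mul_comm]⟩
    set c : ZMod n₂ →+* ZMod k := ZMod.castHom hkd (ZMod k) with hcdef
    have hcval : ∀ x : ZMod n₂, c x = (x.val : ZMod k) := fun x => by
      rw [hcdef, ZMod.castHom_apply, ← ZMod.natCast_val]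
    have hks2 : k ∣ s ^ 2 := by
      have h := hs2
      rw [hkn] at h
      exact (Nat.mul_dvd_mul_iff_left hn1).mp h
    have hs2k : ((s : ZMod k)) ^ 2 = 0 := by
      rw [← Nat.cast_pow]
      exact (ZMod.natCast_eq_zero_iff _ _).mpr hks2
    have hc0 : ∀ x : ZMod n₂, (n₁ : ZMod n₂) * x = 0 → c x = 0 := by
      intro x hx
      have h1 : ((n₁ * x.val : ℕ) : ZMod n₂) = 0 := by
        push_cast
        rw [ZMod.natCast_val, ZMod.cast_id]
        exact hx
      rw [ZMod.natCast_eq_zero_iff] at h1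
      have h2 : k ∣ x.val := by
        obtain ⟨d, hd⟩ := h1
        refine ⟨d, Nat.eq_of_mul_eq_mul_left hn1 ?_⟩
        rw [hd, hkn]
        ring
      rw [hcval]
      exact (ZMod.natCast_eq_zero_iff _ _).mpr h2
    -- intertwining of linear parts at the level of ψ
    have key2 : ∀ x, ψ (CsigmaAuxT hdn r x) = CsigmaAuxT hdm s (φ x) := by
      intro x
      have h1 := hφ x 0
      rw [zero_add, φeq (CsigmaAuxT hdn r x)] at h1
      exact add_left_cancel h1
    -- notation
    set u := φ ((0 : ZMod n₁), (0 : ZMod n₂)) with hu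
    set v := φ ((0 : ZMod n₁), (1 : ZMod n₂)) with hv
    have E0 : ψ ((0 : ZMod n₁), (1 : ZMod n₂)) = CsigmaAuxT hdm s u := by
      have h := key2 ((0 : ZMod n₁), (0 : ZMod n₂))
      rwa [CsigmaAuxT00 hdn r] at h
    have E1 : ψ ((1 : ZMod n₁), (r : ZMod n₂) + 1) = CsigmaAuxT hdm s v := by
      have h := key2 ((0 : ZMod n₁), (1 : ZMod n₂))
      rwa [CsigmaAuxT01 hdn r] at h
    have hvu : v = u + ψ ((0 : ZMod n₁), (1 : ZMod n₂)) := by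
      have h := key ((0 : ZMod n₁), (1 : ZMod n₂)) ((0 : ZMod n₁), (0 : ZMod n₂))
      simpa using h
    -- cast of second component of ψ(1,0) is zero
    have hA0 : c (ψ ((1 : ZMod n₁), (0 : ZMod n₂))).2 = 0 := by
      apply hc0
      have h1 : n₁ • ((1 : ZMod n₁), (0 : ZMod n₂)) = (0 : ZMod n₁ × ZMod n₂) := by
        simp [Prod.ext_iff, Prod.smul_mk, nsmul_eq_mul, ZMod.natCast_self]
      have h2 : n₁ • ψ ((1 : ZMod n₁), (0 : ZMod n₂)) = 0 := by
        rw [← ψsmul, h1, ψ0]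
      have h3 := congrArg Prod.snd h2
      simpa [nsmul_eq_mul] using h3
    -- casted CsigmaAuxT second component
    have htc : ∀ w : ZMod n₁ × ZMod n₂, c (CsigmaAuxT hdm s w).2 = c w.2 * (s : ZMod k) + 1 := by
      intro w
      simp only [CsigmaAuxT]
      rw [map_add, map_sub, map_mul, map_mul, map_one, map_pow, map_natCast, map_natCast, hs2k]
      ring
    set δ : ZMod k := c (ψ ((0 : ZMod n₁), (1 : ZMod n₂))).2 with hδ
    have F0 : δ = c u.2 * (s : ZMod k) + 1 := by
      rw [hδ, E0, htc]
    -- decompose ψ(1, r+1)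
    have hE1L : ψ ((1 : ZMod n₁), (r : ZMod n₂) + 1)
        = ψ ((1 : ZMod n₁), (0 : ZMod n₂)) + (r + 1 : ℕ) • ψ ((0 : ZMod n₁), (1 : ZMod n₂)) := by
      rw [← ψsmul, ← ψadd]
      congr 1
      simp [Prod.ext_iff, Prod.smul_mk, nsmul_eq_mul]
    have F1 : ((r : ZMod k) + 1) * δ = (c u.2 + δ) * (s : ZMod k) + 1 := by
      have h := congrArg (fun z => c z.2) (hE1L.symm.trans E1)
      simp only [Prod.snd_add, map_add] at h
      rw [hA0, zero_add] at h
      have hsm2 : c ((r + 1 : ℕ) • ψ ((0 : ZMod n₁), (1 : ZMod n₂))).2 = ((r : ZMod k) + 1) * δ := by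
        have : ((r + 1 : ℕ) • ψ ((0 : ZMod n₁), (1 : ZMod n₂))).2
            = (r + 1 : ℕ) • (ψ ((0 : ZMod n₁), (1 : ZMod n₂))).2 := rfl
        rw [this, nsmul_eq_mul, map_mul, map_natCast, hδ]
        push_cast
        ring
      rw [hsm2, htc v] at h
      have hcv : c v.2 = c u.2 + δ := by
        have h5 := congrArg (fun z => c z.2) hvu
        simpa [hδ] using h5
      rw [hcv] at h
      exact h
    have hmain : (r : ZMod k) * δ = (s : ZMod k) * δ := by
      linear_combination F1 - F0
    have hgen : ∀ (a : ZMod n₁) (i : ZMod n₂), c (ψ (a, i)).2 = (i.val : ZMod k) * δ := by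
      intro a i
      have hdec : ψ (a, i)
          = a.val • ψ ((1 : ZMod n₁), (0 : ZMod n₂)) + i.val • ψ ((0 : ZMod n₁), (1 : ZMod n₂)) := by
        rw [← ψsmul, ← ψsmul, ← ψadd, ← CsigmaAux_prod_decomp]
      have h := congrArg (fun z => c z.2) hdec
      simp only [Prod.snd_add, Prod.smul_snd, map_add] at h
      simp only [nsmul_eq_mul, map_mul, map_natCast] at h
      rw [h, hA0, hδ]
      ring
    have hunit : ∃ w : ZMod k, w * δ = 1 := by
      obtain ⟨g, hg⟩ := ψbij.2 ((0 : ZMod n₁), (1 : ZMod n₂))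
      obtain ⟨a, i⟩ := g
      refine ⟨(i.val : ZMod k), ?_⟩
      have h := hgen a i
      rw [hg] at h
      simpa using h.symm
    obtain ⟨w, hw⟩ := hunit
    have hrs : (r : ZMod k) = (s : ZMod k) := by
      linear_combination w * hmain - ((r : ZMod k) - (s : ZMod k)) * hw
    have h1 := congrArg ZMod.val hrs
    rwa [ZMod.val_cast_of_lt hrn, ZMod.val_cast_of_lt hsm] at h1
  · rintro ⟨rfl, rfl, rfl⟩
    exact ⟨Equiv.refl _, fun x y => rfl⟩
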